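/- Suppose X_+ = A_s X_- + B_s U_- for some (A_s,B_s). Then rank(X_+ - λ X_-) = n for all λ ∈ ℂ with |λ| ≥ 1 if and only if every (A,B) with X_+ = A X_- + B U_- is stabilizable (i.e., rank[A - λI, B] = n for all |λ| ≥ 1). -/

import Mathlib

open Matrix Complex

/-! ### Auxiliary lemmas -/

lemma aux_rank_eq_card_iff_li {K : Type*} [Field K] {a b : Type*} [Fintype a] [Fintype b]
    (M : Matrix a b K) :
    M.rank = Fintype.card a ↔ LinearIndependent K (fun i => M i) := by
  rw [Matrix.rank_eq_finrank_span_row, linearIndependent_iff_card_eq_finrank_span, Set.finrank,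
    eq_comm]
  rfl

lemma aux_rank_eq_card_iff_ker {K : Type*} [Field K] {a b : Type*} [Fintype a] [Fintype b]
    (M : Matrix a b K) :
    M.rank = Fintype.card a ↔ ∀ v : a → K, v ᵥ* M = 0 → v = 0 := by
  rw [aux_rank_eq_card_iff_li, show (LinearIndependent K fun i => M i) ↔ LinearIndependent K M.row from Iff.rfl,
    ← Matrix.vecMul_injective_iff]
  constructor
  · intro h v hv
    have : v ᵥ* M = (0 : a → K) ᵥ* M := by rw [hv, Matrix.zero_vecMul]
    exact h this
  · intro h u v huv
    simp only [Matrix.vecMul] at huv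
    have : (u - v) ᵥ* M = 0 := by
      rw [Matrix.sub_vecMul]; simp only [Matrix.vecMul, huv, sub_self]
    have := h _ this
    rwa [sub_eq_zero] at this

lemma aux_mapC_mul {a b c : Type*} [Fintype b] (M : Matrix a b ℝ) (N : Matrix b c ℝ) :
    (M * N).map Complex.ofReal = M.map Complex.ofReal * N.map Complex.ofReal := by
  ext i j
  simp [Matrix.mul_apply, Matrix.map_apply]

lemma aux_mapC_add {a b : Type*} (M N : Matrix a b ℝ) :
    (M + N).map Complex.ofReal = M.map Complex.ofReal + N.map Complex.ofReal := by
  ext i j; simp [Matrix.map_apply]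

lemma aux_mapC_sub {a b : Type*} (M N : Matrix a b ℝ) :
    (M - N).map Complex.ofReal = M.map Complex.ofReal - N.map Complex.ofReal := by
  ext i j; simp [Matrix.map_apply]

lemma aux_vecMul_re {a b : Type*} [Fintype a] (w : a → ℂ) (M : Matrix a b ℝ) (j : b) :
    ((w ᵥ* M.map Complex.ofReal) j).re = (((fun i => (w i).re)) ᵥ* M) j := by
  simp [Matrix.vecMul, dotProduct, Matrix.map_apply, Complex.re_sum]

lemma aux_vecMul_im {a b : Type*} [Fintype a] (w : a → ℂ) (M : Matrix a b ℝ) (j : b) :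
    ((w ᵥ* M.map Complex.ofReal) j).im = (((fun i => (w i).im)) ᵥ* M) j := by
  simp [Matrix.vecMul, dotProduct, Matrix.map_apply, Complex.im_sum]

lemma aux_vecMulVec_mul {R : Type*} [CommRing R] {a b c : Type*} [Fintype b]
    (u : a → R) (w : b → R) (M : Matrix b c R) :
    Matrix.vecMulVec u w * M = Matrix.vecMulVec u (w ᵥ* M) := by
  ext i j
  simp [Matrix.mul_apply, Matrix.vecMulVec_apply, Matrix.vecMul, dotProduct,
    Finset.mul_sum, mul_assoc]

lemma aux_vecMul_vecMulVec {R : Type*} [CommRing R] {a b : Type*} [Fintype a]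
    (r : a → R) (u : a → R) (w : b → R) :
    r ᵥ* Matrix.vecMulVec u w = (r ⬝ᵥ u) • w := by
  ext j
  simp [Matrix.vecMul, Matrix.vecMulVec_apply, dotProduct, Finset.sum_mul, mul_assoc]

lemma aux_realVecMul {a b : Type*} [Fintype a] (v : a → ℝ) (M : Matrix a b ℝ) :
    (fun i => (v i : ℂ)) ᵥ* (M.map Complex.ofReal) = fun j => ((v ᵥ* M) j : ℂ) := by
  ext j
  simp [Matrix.vecMul, dotProduct, Matrix.map_apply]

lemma aux_vecMulC_vecMulVec {a b : Type*} [Fintype a]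
    (ξ : a → ℂ) (u : a → ℝ) (w : b → ℝ) :
    ξ ᵥ* (Matrix.vecMulVec u w).map Complex.ofReal
      = (ξ ⬝ᵥ fun i => (u i : ℂ)) • (fun j => (w j : ℂ)) := by
  ext j
  simp [Matrix.vecMul, Matrix.vecMulVec_apply, dotProduct, Matrix.map_apply,
    Finset.sum_mul, mul_assoc]

lemma aux_dotC_real {a : Type*} [Fintype a] (ξ : a → ℂ) (c : a → ℝ) :
    (ξ ⬝ᵥ fun i => (c i : ℂ))
      = (((fun i => (ξ i).re) ⬝ᵥ c : ℝ) : ℂ) + (((fun i => (ξ i).im) ⬝ᵥ c : ℝ) : ℂ) * Complex.I := by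
  apply Complex.ext <;>
    simp [dotProduct, Complex.re_sum, Complex.im_sum]

lemma aux_vecMul_smul_one {a : Type*} [Fintype a] [DecidableEq a] (z : ℂ) (v : a → ℂ) :
    v ᵥ* (z • (1 : Matrix a a ℂ)) = z • v := by
  ext j
  simp [Matrix.vecMul, dotProduct, Matrix.smul_apply, Matrix.one_apply, mul_comm]

lemma aux_vecMul_matSmul {R : Type*} [CommRing R] {a b : Type*} [Fintype a]
    (v : a → R) (z : R) (M : Matrix a b R) :
    v ᵥ* (z • M) = z • (v ᵥ* M) := by
  ext j
  simp [Matrix.vecMul, dotProduct, Matrix.smul_apply, Finset.mul_sum]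
  congr 1; ext i; ring

lemma aux_exists_dual {n : ℕ} (p q : Fin n → ℝ) (h : LinearIndependent ℝ ![p, q]) :
    ∃ c d : Fin n → ℝ, p ⬝ᵥ c = 1 ∧ q ⬝ᵥ c = 0 ∧ p ⬝ᵥ d = 0 ∧ q ⬝ᵥ d = 1 := by
  set M : Matrix (Fin 2) (Fin n) ℝ := Matrix.of ![p, q] with hM
  have hli : LinearIndependent ℝ (fun i => M i) := h
  have hrank : M.rank = 2 := hli.rank_matrix
  set G : Matrix (Fin 2) (Fin 2) ℝ := M * Mᵀ with hG
  have hrG : G.rank = Fintype.card (Fin 2) := by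
    rw [hG, Matrix.rank_self_mul_transpose, hrank]; rfl
  have hGli : LinearIndependent ℝ (fun i => G i) := by
    rw [Matrix.rank_eq_finrank_span_row, linearIndependent_iff_card_eq_finrank_span,
      Set.finrank] at *
    exact hrG.symm
  have hGunit : IsUnit G := Matrix.linearIndependent_rows_iff_isUnit.mp hGli
  have hGinv : G * G⁻¹ = 1 := Matrix.mul_nonsing_inv G ((Matrix.isUnit_iff_isUnit_det G).mp hGunit)
  have key : ∀ e : Fin 2 → ℝ, M *ᵥ (Mᵀ *ᵥ (G⁻¹ *ᵥ e)) = e := by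
    intro e
    rw [Matrix.mulVec_mulVec, Matrix.mulVec_mulVec, ← hG, hGinv, Matrix.one_mulVec]
  refine ⟨Mᵀ *ᵥ (G⁻¹ *ᵥ ![1, 0]), Mᵀ *ᵥ (G⁻¹ *ᵥ ![0, 1]), ?_, ?_, ?_, ?_⟩
  · have := congr_fun (key ![1, 0]) 0; simpa [Matrix.mulVec, hM] using this
  · have := congr_fun (key ![1, 0]) 1; simpa [Matrix.mulVec, hM] using this
  · have := congr_fun (key ![0, 1]) 0; simpa [Matrix.mulVec, hM] using this
  · have := congr_fun (key ![0, 1]) 1; simpa [Matrix.mulVec, hM] using this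

/-- Case where the left-kernel vector can be taken real (real eigenvalue `lam`). -/
lemma aux_caseReal {n m T : ℕ} (Xm Xp : Matrix (Fin n) (Fin T) ℝ) (Um : Matrix (Fin m) (Fin T) ℝ)
    (As : Matrix (Fin n) (Fin n) ℝ) (Bs : Matrix (Fin n) (Fin m) ℝ)
    (hdata : Xp = As * Xm + Bs * Um)
    (lam : ℝ) (r : Fin n → ℝ) (hr : r ≠ 0) (hrel : r ᵥ* Xp = lam • (r ᵥ* Xm)) :
    ∃ (A : Matrix (Fin n) (Fin n) ℝ) (B : Matrix (Fin n) (Fin m) ℝ), Xp = A * Xm + B * Um ∧ ∃ ζ : Fin n → ℂ, ζ ≠ 0 ∧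
      ζ ᵥ* Matrix.fromCols
        (A.map Complex.ofReal - ((lam : ℂ)) • (1 : Matrix (Fin n) (Fin n) ℂ))
        (B.map Complex.ofReal) = 0 := by
  classical
  have hrr : r ⬝ᵥ r ≠ 0 := fun h0 => hr (dotProduct_self_eq_zero.mp h0)
  set c : Fin n → ℝ := (r ⬝ᵥ r)⁻¹ • r with hc
  have hrc : r ⬝ᵥ c = 1 := by
    rw [hc, dotProduct_smul, smul_eq_mul, inv_mul_cancel₀ hrr]
  set ηA : Fin n → ℝ := r ᵥ* As - lam • r with hηA
  set ηB : Fin m → ℝ := r ᵥ* Bs with hηB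
  have hη : ηA ᵥ* Xm + ηB ᵥ* Um = 0 := by
    rw [hηA, hηB, Matrix.sub_vecMul, Matrix.smul_vecMul, Matrix.vecMul_vecMul,
      Matrix.vecMul_vecMul]
    have : r ᵥ* (As * Xm) + r ᵥ* (Bs * Um) = r ᵥ* Xp := by
      rw [hdata, Matrix.vecMul_add]
    rw [sub_add_eq_add_sub, this, hrel, sub_self]
  set A : Matrix (Fin n) (Fin n) ℝ := As - Matrix.vecMulVec c ηA with hA
  set B : Matrix (Fin n) (Fin m) ℝ := Bs - Matrix.vecMulVec c ηB with hB
  have hrA : r ᵥ* A = lam • r := by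
    rw [hA, Matrix.vecMul_sub, aux_vecMul_vecMulVec, hrc, one_smul, hηA, sub_sub_cancel]
  have hrB : r ᵥ* B = 0 := by
    rw [hB, Matrix.vecMul_sub, aux_vecMul_vecMulVec, hrc, one_smul, hηB, sub_self]
  refine ⟨A, B, ?_, fun i => (r i : ℂ), ?_, ?_⟩
  · rw [hA, hB, Matrix.sub_mul, Matrix.sub_mul, aux_vecMulVec_mul, aux_vecMulVec_mul, hdata]
    have : Matrix.vecMulVec c (ηA ᵥ* Xm) + Matrix.vecMulVec c (ηB ᵥ* Um) = 0 := by
      ext i j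
      have := congr_fun hη j
      simp only [Pi.add_apply, Pi.zero_apply] at this
      simp [Matrix.vecMulVec_apply, ← mul_add, this]
    rw [sub_add_sub_comm]
    rw [this, sub_zero]
  · intro h0
    apply hr
    ext i
    have := congr_fun h0 i
    simpa using this
  · rw [Matrix.vecMul_fromCols, Matrix.vecMul_sub, aux_realVecMul, hrA, aux_vecMul_smul_one,
      aux_realVecMul, hrB]
    ext (j | j) <;> simp

/-- Case where the real and imaginary parts of the left-kernel vector are independent. -/
lemma aux_caseComplex {n m T : ℕ}
    (Xm Xp : Matrix (Fin n) (Fin T) ℝ) (Um : Matrix (Fin m) (Fin T) ℝ)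
    (As : Matrix (Fin n) (Fin n) ℝ) (Bs : Matrix (Fin n) (Fin m) ℝ)
    (hdata : Xp = As * Xm + Bs * Um)
    (z : ℂ) (ξ : Fin n → ℂ)
    (hli : LinearIndependent ℝ ![fun i => (ξ i).re, fun i => (ξ i).im])
    (hker : ξ ᵥ* (Xp.map Complex.ofReal - z • Xm.map Complex.ofReal) = 0) :
    ∃ (A : Matrix (Fin n) (Fin n) ℝ) (B : Matrix (Fin n) (Fin m) ℝ), Xp = A * Xm + B * Um ∧
      ξ ᵥ* Matrix.fromCols
        (A.map Complex.ofReal - z • (1 : Matrix (Fin n) (Fin n) ℂ))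
        (B.map Complex.ofReal) = 0 := by
  classical
  obtain ⟨c, d, hpc, hqc, hpd, hqd⟩ := aux_exists_dual _ _ hli
  set αA : Fin n → ℂ := ξ ᵥ* (As.map Complex.ofReal) - z • ξ with hαA
  set αB : Fin m → ℂ := ξ ᵥ* (Bs.map Complex.ofReal) with hαB
  have hα : αA ᵥ* (Xm.map Complex.ofReal) + αB ᵥ* (Um.map Complex.ofReal) = 0 := by
    rw [hαA, hαB, Matrix.sub_vecMul, Matrix.smul_vecMul, Matrix.vecMul_vecMul,
      Matrix.vecMul_vecMul, ← aux_mapC_mul, ← aux_mapC_mul, sub_add_eq_add_sub,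
      ← Matrix.vecMul_add, ← aux_mapC_add, ← hdata]
    rw [Matrix.vecMul_sub] at hker
    rw [← hker]
    congr 1
    rw [aux_vecMul_matSmul]
  set aA : Fin n → ℝ := fun j => (αA j).re with haAdef
  set bA : Fin n → ℝ := fun j => (αA j).im with hbAdef
  set aB : Fin m → ℝ := fun j => (αB j).re with haBdef
  set bB : Fin m → ℝ := fun j => (αB j).im with hbBdef
  have hre : aA ᵥ* Xm + aB ᵥ* Um = 0 := by
    ext j
    have := congr_fun hα j
    simp only [Pi.add_apply, Pi.zero_apply] at this
    have h2 := congr_arg Complex.re this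
    rw [Complex.add_re, aux_vecMul_re, aux_vecMul_re] at h2
    simpa using h2
  have him : bA ᵥ* Xm + bB ᵥ* Um = 0 := by
    ext j
    have := congr_fun hα j
    simp only [Pi.add_apply, Pi.zero_apply] at this
    have h2 := congr_arg Complex.im this
    rw [Complex.add_im, aux_vecMul_im, aux_vecMul_im] at h2
    simpa using h2
  set A : Matrix (Fin n) (Fin n) ℝ :=
    As - (Matrix.vecMulVec c aA + Matrix.vecMulVec d bA) with hA
  set B : Matrix (Fin n) (Fin m) ℝ :=
    Bs - (Matrix.vecMulVec c aB + Matrix.vecMulVec d bB) with hB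
  have hdotc : (ξ ⬝ᵥ fun i => (c i : ℂ)) = 1 := by
    rw [aux_dotC_real, hpc, hqc]; simp
  have hdotd : (ξ ⬝ᵥ fun i => (d i : ℂ)) = Complex.I := by
    rw [aux_dotC_real, hpd, hqd]; simp
  refine ⟨A, B, ?_, ?_⟩
  · rw [hA, hB, Matrix.sub_mul, Matrix.sub_mul, Matrix.add_mul, Matrix.add_mul,
      aux_vecMulVec_mul, aux_vecMulVec_mul, aux_vecMulVec_mul, aux_vecMulVec_mul, hdata]
    have hz : (Matrix.vecMulVec c (aA ᵥ* Xm) + Matrix.vecMulVec d (bA ᵥ* Xm))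
        + (Matrix.vecMulVec c (aB ᵥ* Um) + Matrix.vecMulVec d (bB ᵥ* Um)) = 0 := by
      ext i j
      have h1 := congr_fun hre j
      have h2 := congr_fun him j
      simp only [Pi.add_apply, Pi.zero_apply] at h1 h2
      simp only [Matrix.add_apply, Matrix.vecMulVec_apply, Matrix.zero_apply]
      calc c i * (aA ᵥ* Xm) j + d i * (bA ᵥ* Xm) j + (c i * (aB ᵥ* Um) j + d i * (bB ᵥ* Um) j)
          = c i * ((aA ᵥ* Xm) j + (aB ᵥ* Um) j) + d i * ((bA ᵥ* Xm) j + (bB ᵥ* Um) j) := by ring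
        _ = 0 := by rw [h1, h2]; ring
    rw [sub_add_sub_comm, hz, sub_zero]
  · rw [Matrix.vecMul_fromCols]
    have hkA : ξ ᵥ* (A.map Complex.ofReal - z • (1 : Matrix (Fin n) (Fin n) ℂ)) = 0 := by
      rw [Matrix.vecMul_sub, aux_vecMul_smul_one, hA, aux_mapC_sub, aux_mapC_add,
        Matrix.vecMul_sub, Matrix.vecMul_add, aux_vecMulC_vecMulVec, aux_vecMulC_vecMulVec,
        hdotc, hdotd]
      ext j
      simp only [Pi.sub_apply, Pi.smul_apply, Pi.add_apply, smul_eq_mul, one_mul, Pi.zero_apply]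
      have : αA j = (aA j : ℂ) + (bA j : ℂ) * Complex.I := by
        rw [haAdef, hbAdef]; exact (Complex.re_add_im (αA j)).symm
      have hαAj : (ξ ᵥ* Matrix.map As Complex.ofReal) j - z * ξ j = αA j := rfl
      rw [mul_comm (Complex.I)]
      calc (ξ ᵥ* Matrix.map As Complex.ofReal) j - ((aA j : ℂ) + (bA j : ℂ) * Complex.I) - z * ξ j
          = ((ξ ᵥ* Matrix.map As Complex.ofReal) j - z * ξ j)
            - ((aA j : ℂ) + (bA j : ℂ) * Complex.I) := by ring
        _ = 0 := by rw [hαAj, this]; ring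
    have hkB : ξ ᵥ* (B.map Complex.ofReal) = 0 := by
      rw [hB, aux_mapC_sub, aux_mapC_add, Matrix.vecMul_sub, Matrix.vecMul_add,
        aux_vecMulC_vecMulVec, aux_vecMulC_vecMulVec, hdotc, hdotd]
      ext j
      simp only [Pi.sub_apply, Pi.add_apply, Pi.smul_apply, smul_eq_mul, one_mul, Pi.zero_apply]
      have : αB j = (aB j : ℂ) + (bB j : ℂ) * Complex.I := by
        rw [haBdef, hbBdef]; exact (Complex.re_add_im (αB j)).symm
      have hαBj : (ξ ᵥ* Matrix.map Bs Complex.ofReal) j = αB j := rfl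
      rw [mul_comm (Complex.I), hαBj, this]
      ring
    rw [hkA, hkB]
    ext (j | j) <;> simp

/-- Data-driven Hautus test for stabilizability: assuming the data are generated by
some system, rank(X₊ - λX₋) = n for all λ ∈ ℂ with |λ| ≥ 1 iff every system (A,B) consistent
with the data is stabilizable (Hautus test). -/
theorem informativity_for_stabilizability
    (n m T : ℕ)
    (Xm Xp : Matrix (Fin n) (Fin T) ℝ) (Um : Matrix (Fin m) (Fin T) ℝ)
    (As : Matrix (Fin n) (Fin n) ℝ) (Bs : Matrix (Fin n) (Fin m) ℝ)
    (hdata : Xp = As * Xm + Bs * Um) :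
    (∀ z : ℂ, 1 ≤ ‖z‖ → (Xp.map Complex.ofReal - z • Xm.map Complex.ofReal).rank = n)
    ↔ (∀ (A : Matrix (Fin n) (Fin n) ℝ) (B : Matrix (Fin n) (Fin m) ℝ),
        Xp = A * Xm + B * Um →
        ∀ z : ℂ, 1 ≤ ‖z‖ →
          (Matrix.fromCols
            (A.map Complex.ofReal - z • (1 : Matrix (Fin n) (Fin n) ℂ))
            (B.map Complex.ofReal)).rank = n) := by
  classical
  constructor
  · -- easy direction
    intro h A B hAB z hz
    set F := Matrix.fromCols
      (A.map Complex.ofReal - z • (1 : Matrix (Fin n) (Fin n) ℂ))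
      (B.map Complex.ofReal) with hF
    have key : F * Matrix.fromRows (Xm.map Complex.ofReal) (Um.map Complex.ofReal)
        = Xp.map Complex.ofReal - z • Xm.map Complex.ofReal := by
      rw [hF, Matrix.fromCols_mul_fromRows, Matrix.sub_mul, Matrix.smul_mul, Matrix.one_mul,
        hAB, aux_mapC_add, aux_mapC_mul, aux_mapC_mul, sub_add_eq_add_sub]
    have h1 : F.rank ≤ n := by
      have := F.rank_le_card_height
      simpa using this
    have h2 : n ≤ F.rank := by
      have hr := h z hz
      rw [← key] at hr
      have := Matrix.rank_mul_le_left F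
        (Matrix.fromRows (Xm.map Complex.ofReal) (Um.map Complex.ofReal))
      omega
    omega
  · -- hard direction
    intro h z hz
    have goal' : (Xp.map Complex.ofReal - z • Xm.map Complex.ofReal).rank
        = Fintype.card (Fin n) → (Xp.map Complex.ofReal - z • Xm.map Complex.ofReal).rank = n := by
      rw [Fintype.card_fin]; exact id
    apply goal'
    rw [aux_rank_eq_card_iff_ker]
    intro ξ hξker
    by_contra hξ
    -- produce a consistent system together with a nonzero left-kernel vector
    have main : ∃ (A : Matrix (Fin n) (Fin n) ℝ) (B : Matrix (Fin n) (Fin m) ℝ)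
        (z' : ℂ) (ζ : Fin n → ℂ), Xp = A * Xm + B * Um ∧ 1 ≤ ‖z'‖ ∧ ζ ≠ 0 ∧
        ζ ᵥ* Matrix.fromCols
          (A.map Complex.ofReal - z' • (1 : Matrix (Fin n) (Fin n) ℂ))
          (B.map Complex.ofReal) = 0 := by
      by_cases hli : LinearIndependent ℝ ![fun i => (ξ i).re, fun i => (ξ i).im]
      · obtain ⟨A, B, hcons, hk⟩ := aux_caseComplex Xm Xp Um As Bs hdata z ξ hli hξker
        exact ⟨A, B, z, ξ, hcons, hz, hξ, hk⟩
      · -- ξ is a complex multiple of a real vector r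
        rw [linearIndependent_fin2] at hli
        push_neg at hli
        simp only [Matrix.cons_val_one, Matrix.head_cons, Matrix.cons_val_zero] at hli
        have hex : ∃ (r : Fin n → ℝ) (cc : ℂ), cc ≠ 0 ∧ r ≠ 0 ∧ ∀ i, ξ i = cc * (r i : ℂ) := by
          by_cases hq : (fun i => (ξ i).im) = (0 : Fin n → ℝ)
          · refine ⟨fun i => (ξ i).re, 1, one_ne_zero, ?_, ?_⟩
            · intro h0
              apply hξ
              ext i
              have h1 := congr_fun hq i
              have h2 := congr_fun h0 i
              simp only [Pi.zero_apply] at h1 h2 ⊢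
              exact Complex.ext h2 h1
            · intro i
              have h1 := congr_fun hq i
              simp only [Pi.zero_apply] at h1
              rw [one_mul]
              apply Complex.ext <;> simp [h1]
          · obtain ⟨a, ha⟩ := hli hq
            refine ⟨fun i => (ξ i).im, a + Complex.I, ?_, ?_, ?_⟩
            · intro h0
              have := congr_arg Complex.im h0
              simp at this
            · intro h0
              exact hq (by ext i; exact congr_fun h0 i)
            · intro i
              have h1 := congr_fun ha i
              simp only [Pi.smul_apply, smul_eq_mul] at h1
              apply Complex.ext
              · simp [← h1]
              · simp
        obtain ⟨r, cc, hcc, hr, hrc⟩ := hex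
        -- the real row r is in the left kernel
        have hrker : (fun i => (r i : ℂ)) ᵥ* (Xp.map Complex.ofReal
            - z • Xm.map Complex.ofReal) = 0 := by
          have hsm : ξ = cc • fun i => (r i : ℂ) := by ext i; simpa using hrc i
          rw [hsm, Matrix.smul_vecMul] at hξker
          exact (smul_eq_zero.mp hξker).resolve_left hcc
        rw [Matrix.vecMul_sub, aux_vecMul_matSmul, aux_realVecMul, aux_realVecMul,
          sub_eq_zero] at hrker
        have hcomp : ∀ j, ((r ᵥ* Xp) j : ℂ) = z * ((r ᵥ* Xm) j : ℂ) := by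
          intro j
          have := congr_fun hrker j
          simpa using this
        by_cases hzim : z.im = 0
        · -- z is real
          set lam : ℝ := z.re with hlam
          have hzlam : z = (lam : ℂ) := Complex.ext rfl hzim
          have hrel : r ᵥ* Xp = lam • (r ᵥ* Xm) := by
            ext j
            have := hcomp j
            rw [hzlam] at this
            have := congr_arg Complex.re this
            simpa using this
          obtain ⟨A, B, hcons, ζ, hζ, hk⟩ :=
            aux_caseReal Xm Xp Um As Bs hdata lam r hr hrel
          refine ⟨A, B, (lam : ℂ), ζ, hcons, ?_, hζ, hk⟩
          rwa [← hzlam]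
        · -- z has nonzero imaginary part : r annihilates both Xm and Xp
          have hXm0 : r ᵥ* Xm = 0 := by
            ext j
            have := congr_arg Complex.im (hcomp j)
            simp only [Complex.ofReal_im, Complex.mul_im, Complex.ofReal_re] at this
            have : z.im * (r ᵥ* Xm) j = 0 := by simpa using this.symm
            rcases mul_eq_zero.mp this with h' | h'
            · exact absurd h' hzim
            · simpa using h'
          have hXp0 : r ᵥ* Xp = 0 := by
            ext j
            have := hcomp j
            rw [show (r ᵥ* Xm) j = 0 from congr_fun hXm0 j] at this
            simpa using this
          have hrel : r ᵥ* Xp = (1 : ℝ) • (r ᵥ* Xm) := by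
            rw [hXp0, hXm0, smul_zero]
          obtain ⟨A, B, hcons, ζ, hζ, hk⟩ :=
            aux_caseReal Xm Xp Um As Bs hdata 1 r hr hrel
          refine ⟨A, B, ((1 : ℝ) : ℂ), ζ, hcons, by norm_num, hζ, hk⟩
    obtain ⟨A, B, z', ζ, hcons, hz', hζ, hk⟩ := main
    have hrank := h A B hcons z' hz'
    have hrank' := (aux_rank_eq_card_iff_ker _).mp (by rw [Fintype.card_fin]; exact hrank)
    exact hζ (hrank' ζ hk)
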